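/- In the noise-free iteration x_n ∈ argmin{(1/r)‖F(x) − y‖^r + α_n D_{ξ_{n−1}}Θ(x, x_{n−1})}, ξ_n = ξ_{n−1} − α_n^{−1} F′(x_n)* J_r(F(x_n) − y), suppose the tangential cone condition ‖F(x̂) − F(x_n) − F′(x_n)(x̂ − x_n)‖ ≤ η‖F(x̂) − F(x_n)‖ holds (0 ≤ η < 1) for a solution x̂ of F(x) = y and the iterates. Then D_{ξ_n}Θ(x̂, x_n) − D_{ξ_{n−1}}Θ(x̂, x_{n−1}) ≤ −((1−η)/α_n)‖F(x_n) − y‖^r. -/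

import Mathlib

/-- One-step decrease of the Bregman distance in the noise-free iteration under the
tangential cone condition. -/
theorem noise_free_decrease {X Y : Type*} [NormedAddCommGroup X] [NormedSpace ℝ X]
    [NormedAddCommGroup Y] [NormedSpace ℝ Y]
    (r : ℝ) (hr : 1 < r) (Jr : Y → StrongDual ℝ Y)
    (hJnorm : ∀ u, ‖Jr u‖ = ‖u‖ ^ (r - 1)) (hJpair : ∀ u, Jr u u = ‖u‖ ^ r)
    (Θ : X → ℝ) (F : X → Y) (y : Y)
    (α η : ℝ) (hα : 0 < α) (hη0 : 0 ≤ η) (hη1 : η < 1)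
    (xhat xn xprev : X) (hFxhat : F xhat = y)
    (A : X →L[ℝ] Y)  -- A = F'(x_n)
    (ξn ξprev : StrongDual ℝ X)
    (hξprev : ∀ z, Θ xprev + ξprev (z - xprev) ≤ Θ z)
    (hξdef : ξn = ξprev - α⁻¹ • (Jr (F xn - y)).comp A)
    (hcone : ‖F xhat - F xn - A (xhat - xn)‖ ≤ η * ‖F xhat - F xn‖) :
    (Θ xhat - Θ xn - ξn (xhat - xn)) - (Θ xhat - Θ xprev - ξprev (xhat - xprev))
      ≤ -((1 - η) / α) * ‖F xn - y‖ ^ r := by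
  set u := F xn - y with hu
  set e := F xhat - F xn - A (xhat - xn) with he
  have hsub := hξprev xn
  have hlin : ξprev (xhat - xprev) - ξprev (xn - xprev) = ξprev (xhat - xn) := by
    rw [← map_sub]; congr 1; abel
  have hdiff : ξprev (xhat - xn) - ξn (xhat - xn)
      = α⁻¹ * (Jr u) (A (xhat - xn)) := by
    rw [hξdef]
    simp [ContinuousLinearMap.sub_apply, ContinuousLinearMap.smul_apply,
      ContinuousLinearMap.comp_apply]
  have hnormu : ‖F xhat - F xn‖ = ‖u‖ := by rw [hFxhat, hu, norm_sub_rev]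
  have hApt : A (xhat - xn) = -u - e := by
    rw [he, hu, hFxhat]; abel
  have hpow : ‖u‖ ^ (r - 1) * ‖u‖ = ‖u‖ ^ r := by
    rcases eq_or_ne ‖u‖ 0 with h0 | h0
    · rw [h0, Real.zero_rpow (by linarith), Real.zero_rpow (by linarith), mul_zero]
    · rw [← Real.rpow_add_one h0 (r - 1), sub_add_cancel]
  have hkey : (Jr u) (A (xhat - xn)) ≤ -(1 - η) * ‖u‖ ^ r := by
    have h1 : (Jr u) (A (xhat - xn)) = -(‖u‖ ^ r) - (Jr u) e := by
      rw [hApt, map_sub, map_neg, hJpair]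
    have h2 : -(Jr u) e ≤ ‖Jr u‖ * ‖e‖ := by
      calc -(Jr u) e ≤ |(Jr u) e| := neg_le_abs _
        _ ≤ ‖Jr u‖ * ‖e‖ := (Jr u).le_opNorm e
    have h3 : ‖Jr u‖ * ‖e‖ ≤ ‖u‖ ^ (r - 1) * (η * ‖u‖) := by
      rw [hJnorm]
      exact mul_le_mul_of_nonneg_left (by rwa [hnormu] at hcone)
        (Real.rpow_nonneg (norm_nonneg _) _)
    have h4 : ‖u‖ ^ (r - 1) * (η * ‖u‖) = η * ‖u‖ ^ r := by
      rw [← hpow]; ring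
    nlinarith
  have hfin : α⁻¹ * (Jr u) (A (xhat - xn)) ≤ -((1 - η) / α) * ‖u‖ ^ r := by
    have := mul_le_mul_of_nonneg_left hkey (le_of_lt (inv_pos.mpr hα))
    calc α⁻¹ * (Jr u) (A (xhat - xn)) ≤ α⁻¹ * (-(1 - η) * ‖u‖ ^ r) := this
      _ = -((1 - η) / α) * ‖u‖ ^ r := by field_simp
  calc (Θ xhat - Θ xn - ξn (xhat - xn)) - (Θ xhat - Θ xprev - ξprev (xhat - xprev))
      ≤ -ξprev (xn - xprev) - ξn (xhat - xn) + ξprev (xhat - xprev) := by linarith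
    _ = ξprev (xhat - xn) - ξn (xhat - xn) := by linarith [hlin]
    _ = α⁻¹ * (Jr u) (A (xhat - xn)) := hdiff
    _ ≤ -((1 - η) / α) * ‖u‖ ^ r := hfin
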